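/- Let n and k be integers with 1 ≤ k ≤ n/2 and let G be a connected simple graph on n vertices with minimum degree at least k. Then R'(G) ≥ n/2 − (1/2)·(1/k − 1/(n−1))·k·(n−k). -/

import Mathlib

open scoped Classical

/-- The variation of the Randić index: `R'(G) = ∑_{uv ∈ E(G)} 1 / max(d(u), d(v))`. -/
noncomputable def Rvar {V : Type*} [Fintype V] (G : SimpleGraph V) : ℝ :=
  ∑ e ∈ G.edgeFinset,
    Sym2.lift ⟨fun u v => (1 : ℝ) / (max (G.degree u) (G.degree v) : ℕ),
      fun u v => by dsimp only; rw [max_comm]⟩ e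

open Finset

private lemma tele_Ico (f : ℕ → ℝ) {a b : ℕ} (h : a ≤ b) :
    ∑ i ∈ Finset.Ico a b, (f i - f (i+1)) = f a - f b := by
  induction b with
  | zero => interval_cases a; simp
  | succ b ih =>
    rcases Nat.lt_or_ge a (b+1) with h' | h'
    · have hab : a ≤ b := Nat.lt_succ_iff.mp h'
      rw [Finset.sum_Ico_succ_top hab, ih hab]; ring
    · have : a = b+1 := le_antisymm h h'
      subst this; simp

private lemma tele_inv_Ico {a b : ℕ} (h : a ≤ b) :
    ∑ i ∈ Finset.Ico a b, ((1:ℝ)/i - 1/(i+1)) = 1/a - 1/b := by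
  have := tele_Ico (fun i => (1:ℝ)/i) h
  simpa using this

private lemma arith {V : Type*} [Fintype V] (d : V → ℕ) (n k : ℕ)
    (hk : 1 ≤ k) (hkn : 2*k ≤ n) (hcard : Fintype.card V = n)
    (hdlo : ∀ v, k ≤ d v) (hdhi : ∀ v, d v ≤ n - 1) :
    ∑ i ∈ Finset.Ico k (n-1), ((1:ℝ)/i - 1/(i+1)) *
        ((∑ u ∈ univ.filter (fun u => d u ≤ i),
          min (d u) (univ.filter (fun w => i < d w)).card : ℕ) : ℝ)
      ≤ (k:ℝ) * ((n:ℝ) - k) * (1/k - 1/((n:ℝ)-1)) := by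
  classical
  set b : ℕ → ℕ := fun i => (univ.filter (fun w => i < d w)).card with hb
  set c : ℕ → ℕ := fun i => ∑ u ∈ univ.filter (fun u => d u ≤ i), min (d u) (b i) with hc
  have hkN : k ≤ n - 1 := by omega
  have hn2 : 2 ≤ n := by omega
  -- threshold m
  have hPex : b (n-1) ≤ k := by
    have : univ.filter (fun w => n-1 < d w) = ∅ := by
      apply Finset.filter_false_of_mem
      intro w _
      exact Nat.not_lt.mpr (hdhi w)
    simp [hb, this]
  set m0 := Nat.find (⟨n-1, hPex⟩ : ∃ i, b i ≤ k) with hm0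
  have hm0N : m0 ≤ n - 1 := Nat.find_le hPex
  have hbm0 : b m0 ≤ k := Nat.find_spec (⟨n-1, hPex⟩ : ∃ i, b i ≤ k)
  set m := max k m0 with hm
  have hkm : k ≤ m := le_max_left _ _
  have hmN : m ≤ n - 1 := max_le hkN hm0N
  have hbanti : ∀ i, m ≤ i → b i ≤ k := by
    intro i hi
    refine le_trans (Finset.card_le_card ?_) hbm0
    intro w hw
    simp only [mem_filter, mem_univ, true_and] at hw ⊢
    have : m0 ≤ i := le_trans (le_max_right _ _) hi
    omega
  -- cast facts
  have hNcast : ((n-1 : ℕ) : ℝ) = (n:ℝ) - 1 := by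
    push_cast [Nat.cast_sub (by omega : 1 ≤ n)]; ring
  have hsplit := Finset.sum_Ico_consecutive
      (fun i => ((1:ℝ)/i - 1/(i+1)) * ((c i : ℕ) : ℝ)) hkm hmN
  rw [← hsplit]
  -- Part 2 : i ∈ Ico m (n-1)
  have part2 : ∑ i ∈ Finset.Ico m (n-1), ((1:ℝ)/i - 1/(i+1)) * (c i : ℝ)
      ≤ (k:ℝ) * ((n:ℝ) - k) * (1/m - 1/((n:ℝ)-1)) := by
    have hstep : ∀ i ∈ Finset.Ico m (n-1),
        ((1:ℝ)/i - 1/(i+1)) * (c i : ℝ) ≤ ((1:ℝ)/i - 1/(i+1)) * ((k:ℝ) * ((n:ℝ)-k)) := by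
      intro i hi
      rw [Finset.mem_Ico] at hi
      have hi1 : 1 ≤ i := le_trans hk (le_trans hkm hi.1)
      have hw : (0:ℝ) ≤ 1/i - 1/(i+1) := by
        rw [sub_nonneg]
        apply one_div_le_one_div_of_le
        · exact_mod_cast hi1
        · push_cast; linarith
      apply mul_le_mul_of_nonneg_left _ hw
      -- c i ≤ a i * b i ≤ k (n-k)
      have hbi : b i ≤ k := hbanti i hi.1
      have hci : c i ≤ (univ.filter (fun u => d u ≤ i)).card * b i := by
        rw [hc]
        calc ∑ u ∈ univ.filter (fun u => d u ≤ i), min (d u) (b i)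
            ≤ ∑ u ∈ univ.filter (fun u => d u ≤ i), b i :=
              Finset.sum_le_sum (fun u _ => min_le_right _ _)
          _ = (univ.filter (fun u => d u ≤ i)).card * b i := by
              rw [Finset.sum_const, smul_eq_mul]
      have hab : (univ.filter (fun u => d u ≤ i)).card + b i = n := by
        have hbeq : b i = (univ.filter (fun u => ¬ (d u ≤ i))).card := by
          simp only [hb]
          congr 1
          ext w
          simp [not_le]
        rw [hbeq, Finset.card_filter_add_card_filter_not, Finset.card_univ, hcard]
      have hcast : ((c i : ℕ):ℝ) ≤ ((univ.filter (fun u => d u ≤ i)).card : ℝ) * (b i : ℝ) := by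
        exact_mod_cast hci
      have h1 : ((b i : ℕ):ℝ) ≤ (k:ℝ) := by exact_mod_cast hbi
      have h2 : ((univ.filter (fun u => d u ≤ i)).card : ℝ) + (b i : ℝ) = (n:ℝ) := by
        exact_mod_cast hab
      have h3 : 2*(k:ℝ) ≤ (n:ℝ) := by exact_mod_cast hkn
      nlinarith [hcast]
    calc ∑ i ∈ Finset.Ico m (n-1), ((1:ℝ)/i - 1/(i+1)) * (c i : ℝ)
        ≤ ∑ i ∈ Finset.Ico m (n-1), ((1:ℝ)/i - 1/(i+1)) * ((k:ℝ) * ((n:ℝ)-k)) :=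
          Finset.sum_le_sum hstep
      _ = (k:ℝ) * ((n:ℝ)-k) * (1/m - 1/((n:ℝ)-1)) := by
          rw [← Finset.sum_mul, tele_inv_Ico hmN, hNcast]; ring
  -- Part 1 : i ∈ Ico k m
  have part1 : ∑ i ∈ Finset.Ico k m, ((1:ℝ)/i - 1/(i+1)) * (c i : ℝ)
      ≤ (k:ℝ) * ((n:ℝ) - k) * (1/k - 1/(m:ℝ)) := by
    have hm1 : 1 ≤ m := le_trans hk hkm
    have hk0 : ((k:ℝ)) ≠ 0 := by positivity
    have hm0' : ((m:ℝ)) ≠ 0 := by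
      have : (0:ℕ) < m := hm1
      positivity
    -- step A: bound c i by the plain degree sum
    have stepA : ∀ i ∈ Finset.Ico k m,
        ((1:ℝ)/i - 1/(i+1)) * (c i : ℝ)
          ≤ ((1:ℝ)/i - 1/(i+1)) * ((∑ u ∈ univ.filter (fun u => d u ≤ i), d u : ℕ) : ℝ) := by
      intro i hi
      rw [Finset.mem_Ico] at hi
      have hi1 : 1 ≤ i := le_trans hk hi.1
      have hw : (0:ℝ) ≤ 1/i - 1/(i+1) := by
        rw [sub_nonneg]
        apply one_div_le_one_div_of_le
        · exact_mod_cast hi1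
        · push_cast; linarith
      apply mul_le_mul_of_nonneg_left _ hw
      have : c i ≤ ∑ u ∈ univ.filter (fun u => d u ≤ i), d u := by
        rw [hc]
        exact Finset.sum_le_sum (fun u _ => min_le_left _ _)
      exact_mod_cast this
    have keyB : ∑ i ∈ Finset.Ico k m,
        ((1:ℝ)/i - 1/(i+1)) * ((∑ u ∈ univ.filter (fun u => d u ≤ i), d u : ℕ) : ℝ)
        = ∑ u ∈ univ.filter (fun u => d u < m), (1 - (d u : ℝ)/m) := by
      have swap : ∑ i ∈ Finset.Ico k m,
          ((1:ℝ)/i - 1/(i+1)) * ((∑ u ∈ univ.filter (fun u => d u ≤ i), d u : ℕ) : ℝ)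
          = ∑ u : V, ∑ i ∈ Finset.Ico k m,
              (if d u ≤ i then ((1:ℝ)/i - 1/(i+1)) * (d u : ℝ) else 0) := by
        rw [Finset.sum_comm]
        apply Finset.sum_congr rfl
        intro i _
        rw [← Finset.sum_filter]
        push_cast
        rw [Finset.mul_sum]
      rw [swap]
      have inner : ∀ u : V, ∑ i ∈ Finset.Ico k m,
          (if d u ≤ i then ((1:ℝ)/i - 1/(i+1)) * (d u : ℝ) else 0)
          = if d u < m then 1 - (d u : ℝ)/m else 0 := by
        intro u
        rw [← Finset.sum_filter]
        have hfil : (Finset.Ico k m).filter (fun i => d u ≤ i) = Finset.Ico (d u) m := by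
          ext j
          simp only [Finset.mem_filter, Finset.mem_Ico]
          have := hdlo u
          omega
        rw [hfil]
        by_cases hdu : d u < m
        · rw [← Finset.sum_mul, tele_inv_Ico (le_of_lt hdu), if_pos hdu]
          have hdu0 : ((d u : ℕ):ℝ) ≠ 0 := by
            have : (0:ℕ) < d u := le_trans hk (hdlo u)
            positivity
          field_simp
        · rw [if_neg hdu, Finset.Ico_eq_empty (by omega), Finset.sum_empty]
      rw [Finset.sum_congr rfl (fun u _ => inner u), ← Finset.sum_filter]
    have cardbd : ((univ.filter (fun u => d u < m)).card : ℝ) ≤ (n:ℝ) - k := by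
      rcases Nat.lt_or_ge k m with hkm' | hkm'
      · -- k < m : then m = m0 and b (m-1) ≥ k+1
        have hmm0 : m = m0 := by
          rcases le_total m0 k with h | h
          · exfalso
            rw [hm, max_eq_left h] at hkm'
            exact lt_irrefl _ hkm'
          · rw [hm, max_eq_right h]
        have hlt : m - 1 < m0 := by omega
        have hnotP : ¬ (b (m-1) ≤ k) := by
          rw [hm0] at hlt
          exact Nat.find_min (⟨n-1, hPex⟩ : ∃ i, b i ≤ k) hlt
        have hbm1 : k + 1 ≤ b (m-1) := by omega
        have hbeq2 : b (m-1) = (univ.filter (fun u => ¬ (d u < m))).card := by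
          simp only [hb]
          congr 1
          ext w
          simp only [Finset.mem_filter, Finset.mem_univ, true_and, not_lt]
          omega
        have hsum : (univ.filter (fun u => d u < m)).card
            + (univ.filter (fun u => ¬ (d u < m))).card = n := by
          rw [Finset.card_filter_add_card_filter_not, Finset.card_univ, hcard]
        have : (univ.filter (fun u => d u < m)).card ≤ n - k := by omega
        have hkn' : k ≤ n := by omega
        calc ((univ.filter (fun u => d u < m)).card : ℝ) ≤ ((n - k : ℕ) : ℝ) := by
              exact_mod_cast this
          _ = (n:ℝ) - k := by
              push_cast [Nat.cast_sub hkn']; ring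
      · -- m ≤ k : then m = k and the filter is empty
        have : (univ.filter (fun u => d u < m)) = ∅ := by
          apply Finset.filter_false_of_mem
          intro u _
          have := hdlo u
          omega
        rw [this]
        simp
        have : (2*k : ℝ) ≤ (n:ℝ) := by exact_mod_cast hkn
        linarith [hk, (by exact_mod_cast hk : (1:ℝ) ≤ (k:ℝ))]
    have termbd : ∀ u ∈ univ.filter (fun u => d u < m),
        (1 - (d u : ℝ)/m) ≤ 1 - (k:ℝ)/m := by
      intro u _
      have : (k:ℝ) ≤ (d u : ℝ) := by exact_mod_cast hdlo u
      have hmpos : (0:ℝ) < (m:ℝ) := by exact_mod_cast hm1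
      gcongr
    calc ∑ i ∈ Finset.Ico k m, ((1:ℝ)/i - 1/(i+1)) * (c i : ℝ)
        ≤ ∑ i ∈ Finset.Ico k m,
            ((1:ℝ)/i - 1/(i+1)) * ((∑ u ∈ univ.filter (fun u => d u ≤ i), d u : ℕ) : ℝ) :=
          Finset.sum_le_sum stepA
      _ = ∑ u ∈ univ.filter (fun u => d u < m), (1 - (d u : ℝ)/m) := keyB
      _ ≤ ∑ u ∈ univ.filter (fun u => d u < m), (1 - (k:ℝ)/m) :=
          Finset.sum_le_sum termbd
      _ = ((univ.filter (fun u => d u < m)).card : ℝ) * (1 - (k:ℝ)/m) := by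
          rw [Finset.sum_const, nsmul_eq_mul]
      _ ≤ ((n:ℝ) - k) * (1 - (k:ℝ)/m) := by
          apply mul_le_mul_of_nonneg_right cardbd
          have hkm'' : (k:ℝ) ≤ (m:ℝ) := by exact_mod_cast hkm
          have hmpos : (0:ℝ) < (m:ℝ) := by exact_mod_cast hm1
          rw [sub_nonneg]
          exact div_le_one_of_le₀ hkm'' (le_of_lt hmpos)
      _ = (k:ℝ) * ((n:ℝ) - k) * (1/k - 1/(m:ℝ)) := by
          field_simp
  have final : (k:ℝ) * ((n:ℝ) - k) * (1/k - 1/(m:ℝ))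
      + (k:ℝ) * ((n:ℝ) - k) * (1/(m:ℝ) - 1/((n:ℝ)-1))
      = (k:ℝ) * ((n:ℝ) - k) * (1/k - 1/((n:ℝ)-1)) := by ring
  linarith [part1, part2]



private lemma dart_edge_sum {V : Type*} [Fintype V] (G : SimpleGraph V) (F : Sym2 V → ℝ) :
    ∑ δ : G.Dart, F δ.edge = 2 * ∑ e ∈ G.edgeFinset, F e := by
  classical
  rw [← Finset.sum_fiberwise_of_maps_to
    (g := fun δ : G.Dart => δ.edge) (t := G.edgeFinset)
    (fun δ _ => SimpleGraph.mem_edgeFinset.mpr δ.edge_mem) (fun δ => F δ.edge)]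
  rw [Finset.mul_sum]
  apply Finset.sum_congr rfl
  intro e he
  have hcard : (univ.filter (fun δ : G.Dart => δ.edge = e)).card = 2 :=
    G.dart_edge_fiber_card e (SimpleGraph.mem_edgeFinset.mp he)
  calc ∑ δ ∈ univ.filter (fun δ : G.Dart => δ.edge = e), F δ.edge
      = ∑ δ ∈ univ.filter (fun δ : G.Dart => δ.edge = e), F e := by
        apply Finset.sum_congr rfl
        intro δ hδ
        rw [(Finset.mem_filter.mp hδ).2]
    _ = 2 * F e := by rw [Finset.sum_const, hcard]; simp
 
private lemma dart_fst_sum {V : Type*} [Fintype V] (G : SimpleGraph V) (f : V → ℝ) :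
    ∑ δ : G.Dart, f δ.fst = ∑ v : V, (G.degree v : ℝ) * f v := by
  classical
  rw [← Finset.sum_fiberwise_of_maps_to
    (g := fun δ : G.Dart => δ.fst) (t := univ) (fun δ _ => Finset.mem_univ _)
    (fun δ => f δ.fst)]
  apply Finset.sum_congr rfl
  intro v _
  calc ∑ δ ∈ univ.filter (fun δ : G.Dart => δ.fst = v), f δ.fst
      = ∑ δ ∈ univ.filter (fun δ : G.Dart => δ.fst = v), f v := by
        apply Finset.sum_congr rfl
        intro δ hδ
        rw [(Finset.mem_filter.mp hδ).2]
    _ = (G.degree v : ℝ) * f v := by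
        rw [Finset.sum_const, G.dart_fst_fiber_card_eq_degree v, nsmul_eq_mul]

theorem stmt_0 {n k : ℕ} (hk : 1 ≤ k) (hkn : 2 * k ≤ n)
    {V : Type*} [Fintype V] (G : SimpleGraph V)
    (hcard : Fintype.card V = n) (hconn : G.Connected)
    (hmin : ∀ v : V, k ≤ G.degree v) :
    (n : ℝ) / 2 - (1 / 2) * (1 / k - 1 / ((n : ℝ) - 1)) * k * (n - k) ≤ Rvar G := by
  classical
  set d : V → ℕ := fun v => G.degree v with hd
  have hn2 : 2 ≤ n := by omega
  have hdhi : ∀ v, d v ≤ n - 1 := by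
    intro v
    have h := G.degree_lt_card_verts v
    rw [hcard] at h
    simp only [hd]
    omega
  have hdlo : ∀ v, k ≤ d v := hmin
  have hd0 : ∀ v, ((d v : ℕ) : ℝ) ≠ 0 := by
    intro v
    have : (0:ℕ) < d v := lt_of_lt_of_le hk (hdlo v)
    positivity
  -- dart expansion of Rvar
  have key1 : ∑ δ : G.Dart, (1:ℝ) / (max (d δ.fst) (d δ.snd) : ℕ) = 2 * Rvar G := by
    rw [Rvar, ← dart_edge_sum]
    apply Finset.sum_congr rfl
    rintro ⟨⟨u, v⟩, hadj⟩ _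
    simp [SimpleGraph.Dart.edge, Sym2.lift_mk]
    rfl
  -- per-dart identity
  have key2 : ∀ δ : G.Dart, (1:ℝ) / (max (d δ.fst) (d δ.snd) : ℕ)
      = 1 / (d δ.fst) - (if d δ.fst < d δ.snd then (1:ℝ)/(d δ.fst) - 1/(d δ.snd) else 0) := by
    intro δ
    by_cases h : d δ.fst < d δ.snd
    · rw [if_pos h, max_eq_right (le_of_lt h)]
      ring
    · rw [if_neg h, max_eq_left (le_of_not_gt h)]
      ring
  have key3 : ∑ δ : G.Dart, (1:ℝ)/(d δ.fst) = (n : ℝ) := by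
    rw [dart_fst_sum G (fun v => (1:ℝ)/(d v))]
    calc ∑ v : V, (G.degree v : ℝ) * (1/(d v)) = ∑ v : V, 1 := by
          apply Finset.sum_congr rfl
          intro v _
          have h0 : ((G.degree v : ℕ):ℝ) ≠ 0 := hd0 v
          show ((G.degree v : ℕ):ℝ) * (1/((G.degree v : ℕ):ℝ)) = 1
          field_simp
      _ = (n:ℝ) := by rw [Finset.sum_const, Finset.card_univ, hcard, nsmul_eq_mul, mul_one]
  set D : ℝ := ∑ δ : G.Dart, (if d δ.fst < d δ.snd then (1:ℝ)/(d δ.fst) - 1/(d δ.snd) else 0)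
    with hD
  have key4 : 2 * Rvar G = (n:ℝ) - D := by
    rw [← key1, hD]
    rw [Finset.sum_congr rfl (fun δ _ => key2 δ), Finset.sum_sub_distrib, key3]
  -- telescoping layer expansion of D
  set w : ℕ → ℝ := fun i => (1:ℝ)/i - 1/(i+1) with hw
  have key5 : D = ∑ i ∈ Finset.Ico k (n-1),
      ((univ.filter (fun δ : G.Dart => d δ.fst ≤ i ∧ i < d δ.snd)).card : ℝ) * w i := by
    rw [hD]
    have perδ : ∀ δ : G.Dart,
        (if d δ.fst < d δ.snd then (1:ℝ)/(d δ.fst) - 1/(d δ.snd) else 0)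
        = ∑ i ∈ Finset.Ico k (n-1), (if d δ.fst ≤ i ∧ i < d δ.snd then w i else 0) := by
      intro δ
      by_cases h : d δ.fst < d δ.snd
      · rw [if_pos h, ← Finset.sum_filter]
        have hfil : (Finset.Ico k (n-1)).filter (fun i => d δ.fst ≤ i ∧ i < d δ.snd)
            = Finset.Ico (d δ.fst) (d δ.snd) := by
          ext j
          simp only [Finset.mem_filter, Finset.mem_Ico]
          have h1 := hdlo δ.fst
          have h2 := hdhi δ.snd
          omega
        rw [hfil, hw]
        exact (tele_inv_Ico (le_of_lt h)).symm
      · rw [if_neg h]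
        symm
        apply Finset.sum_eq_zero
        intro i _
        rw [if_neg]
        omega
    rw [Finset.sum_congr rfl (fun δ _ => perδ δ), Finset.sum_comm]
    apply Finset.sum_congr rfl
    intro i _
    rw [← Finset.sum_filter, Finset.sum_const, nsmul_eq_mul]
  -- count bound
  set b : ℕ → ℕ := fun i => (univ.filter (fun w => i < d w)).card with hb
  have key6 : ∀ i, (univ.filter (fun δ : G.Dart => d δ.fst ≤ i ∧ i < d δ.snd)).card
      ≤ ∑ u ∈ univ.filter (fun u => d u ≤ i), min (d u) (b i) := by
    intro i
    rw [Finset.card_eq_sum_card_fiberwise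
      (f := fun δ : G.Dart => δ.fst) (t := univ.filter (fun u => d u ≤ i))
      (fun δ hδ => by
        simp only [Finset.mem_coe, Finset.mem_filter, Finset.mem_univ, true_and] at hδ ⊢
        exact hδ.1)]
    apply Finset.sum_le_sum
    intro u hu
    apply le_min
    · -- ≤ degree u
      have : ((univ.filter (fun δ : G.Dart => d δ.fst ≤ i ∧ i < d δ.snd)).filter
          (fun δ => δ.fst = u)).card ≤ (G.neighborFinset u).card := by
        apply Finset.card_le_card_of_injOn (fun δ => δ.snd)
        · intro δ hδ
          simp only [Finset.mem_coe, Finset.mem_filter, Finset.mem_univ, true_and] at hδ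
          rw [Finset.mem_coe, SimpleGraph.mem_neighborFinset, ← hδ.2]
          exact δ.adj
        · intro δ1 h1 δ2 h2 hsnd
          simp only [Finset.coe_filter, Set.mem_setOf_eq] at h1 h2
          apply SimpleGraph.Dart.ext
          rw [Prod.ext_iff]
          exact ⟨h1.2.trans h2.2.symm, hsnd⟩
      rwa [G.card_neighborFinset_eq_degree] at this
    · -- ≤ b i
      rw [hb]
      apply Finset.card_le_card_of_injOn (fun δ => δ.snd)
      · intro δ hδ
        simp only [Finset.mem_coe, Finset.mem_filter, Finset.mem_univ, true_and] at hδ ⊢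
        exact hδ.1.2
      · intro δ1 h1 δ2 h2 hsnd
        simp only [Finset.coe_filter, Set.mem_setOf_eq] at h1 h2
        apply SimpleGraph.Dart.ext
        rw [Prod.ext_iff]
        exact ⟨h1.2.trans h2.2.symm, hsnd⟩
  -- put together
  have key7 : D ≤ (k:ℝ) * ((n:ℝ) - k) * (1/k - 1/((n:ℝ)-1)) := by
    rw [key5]
    have step : ∀ i ∈ Finset.Ico k (n-1),
        ((univ.filter (fun δ : G.Dart => d δ.fst ≤ i ∧ i < d δ.snd)).card : ℝ) * w i
        ≤ w i * ((∑ u ∈ univ.filter (fun u => d u ≤ i), min (d u) (b i) : ℕ) : ℝ) := by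
      intro i hi
      rw [Finset.mem_Ico] at hi
      have hi1 : 1 ≤ i := le_trans hk hi.1
      have hw0 : (0:ℝ) ≤ w i := by
        rw [hw, sub_nonneg]
        apply one_div_le_one_div_of_le
        · exact_mod_cast hi1
        · push_cast; linarith
      rw [mul_comm]
      apply mul_le_mul_of_nonneg_left _ hw0
      exact_mod_cast key6 i
    calc ∑ i ∈ Finset.Ico k (n-1),
          ((univ.filter (fun δ : G.Dart => d δ.fst ≤ i ∧ i < d δ.snd)).card : ℝ) * w i
        ≤ ∑ i ∈ Finset.Ico k (n-1),
            w i * ((∑ u ∈ univ.filter (fun u => d u ≤ i), min (d u) (b i) : ℕ) : ℝ) :=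
          Finset.sum_le_sum step
      _ ≤ (k:ℝ) * ((n:ℝ) - k) * (1/k - 1/((n:ℝ)-1)) := by
          have := arith d n k hk hkn hcard hdlo hdhi
          exact this
  -- final algebra
  have goal' : (n : ℝ) / 2 - (1 / 2) * (1 / k - 1 / ((n : ℝ) - 1)) * k * (n - k)
      ≤ (n:ℝ)/2 - D/2 := by
    have : (1 / 2) * (1 / (k:ℝ) - 1 / ((n : ℝ) - 1)) * k * ((n:ℝ) - k)
        = (1/2) * ((k:ℝ) * ((n:ℝ) - k) * (1/k - 1/((n:ℝ)-1))) := by ring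
    rw [this]
    linarith [key7]
  linarith [key4, goal']
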